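/- Consider the Lorenz 96' system in ℝ^d, d ≥ 4, with A the identity, bilinear form B(u,ũ)_i = −(1/2)(ũ_{i−1}u_{i+1} + u_{i−1}ũ_{i+1} − ũ_{i−2}u_{i−1} − u_{i−2}ũ_{i−1}) with indices taken modulo d, and f = (8, …, 8). Then for every u ∈ ℝ^d with u_m ≠ 0 for all 1 ≤ m ≤ d: (i) any v ∈ ℝ^d satisfying (D^i v)_m = (D^i u)_m for every m ∈ {1, 2, 3} and every 0 ≤ i ≤ d − 3 equals u; and (ii) the gradients at u of the polynomial functions v ↦ (D^i v)_m, for m ∈ {1, 2, 3} and 0 ≤ i ≤ d − 3, span ℝ^d. -/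

import Mathlib

noncomputable section

/-- The formal time derivatives `D^i v` of a solution of
`dv/dt = -A v - B(v,v) + f` at time `0`. -/
def formalDeriv {E : Type*} [AddCommGroup E] [Module ℝ E]
    (A : E → E) (B : E → E → E) (f : E) : ℕ → E → E
  | 0, v => v
  | 1, v => f - A v - B v v
  | (i + 2), v =>
      -(A (formalDeriv A B f (i + 1) v)) -
        ∑ j ∈ (Finset.range (i + 2)).attach,
          ((i + 1).choose j.1 : ℝ) •
            B (formalDeriv A B f j.1 v) (formalDeriv A B f (i + 1 - j.1) v)
  termination_by i _ => i
  decreasing_by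
  · omega
  · have := Finset.mem_range.mp j.2; omega
  · have := Finset.mem_range.mp j.2; omega

/-- The bilinear part of the Lorenz 96' system:
`B(u,ũ)_i = -(1/2)(ũ_{i-1}u_{i+1} + u_{i-1}ũ_{i+1} - ũ_{i-2}u_{i-1} - u_{i-2}ũ_{i-1})`,
with indices modulo `d`. -/
def lorenz96B (d : ℕ) [NeZero d] :
    EuclideanSpace ℝ (Fin d) → EuclideanSpace ℝ (Fin d) → EuclideanSpace ℝ (Fin d) :=
  fun u w => (WithLp.equiv 2 (Fin d → ℝ)).symm (fun i =>
    -(1 / 2) * (w (i - 1) * u (i + 1) + u (i - 1) * w (i + 1)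
      - w (i - 2) * u (i - 1) - u (i - 2) * w (i - 1)))

/-- The constant forcing `(8, …, 8)` of the Lorenz 96' system. -/
def lorenz96f (d : ℕ) : EuclideanSpace ℝ (Fin d) :=
  (WithLp.equiv 2 (Fin d → ℝ)).symm (fun _ => 8)

open Fin.CommRing

namespace L96
variable {d : ℕ} [NeZero d]

def D (i : ℕ) (v : EuclideanSpace ℝ (Fin d)) : EuclideanSpace ℝ (Fin d) :=
  formalDeriv (fun x => x) (lorenz96B d) (lorenz96f d) i v

def g (i : ℕ) (t : ℤ) (v : EuclideanSpace ℝ (Fin d)) : ℝ := D i v ((t : Fin d))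

def upd (v : EuclideanSpace ℝ (Fin d)) (x : Fin d) (y : ℝ) : EuclideanSpace ℝ (Fin d) :=
  WithLp.toLp 2 (Function.update v.ofLp x y)

lemma upd_self (x : Fin d) (y : ℝ) (v : EuclideanSpace ℝ (Fin d)) : upd v x y x = y := by
  simp [upd]

lemma upd_of_ne {a a' : Fin d} (h : a ≠ a') (y : ℝ) (v : EuclideanSpace ℝ (Fin d)) :
    upd v a' y a = v a := by
  simp [upd, Function.update_of_ne h]

lemma upd_idem (a : Fin d) (y z : ℝ) (v : EuclideanSpace ℝ (Fin d)) :
    upd (upd v a y) a z = upd v a z := by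
  simp [upd]

lemma upd_eq_self (a : Fin d) (v : EuclideanSpace ℝ (Fin d)) : upd v a (v a) = v := by
  simp [upd]

lemma ciff (a b : ℤ) : ((a : Fin d)) = (b : Fin d) ↔ (d : ℤ) ∣ a - b := by
  constructor
  · intro h
    have h2 : ((a - b : ℤ) : Fin d) = 0 := by push_cast [h]; ring
    exact (CharP.intCast_eq_zero_iff (Fin d) d _).1 h2
  · intro h
    have h2 : ((a - b : ℤ) : Fin d) = 0 := (CharP.intCast_eq_zero_iff (Fin d) d _).2 h
    push_cast at h2
    exact sub_eq_zero.mp h2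

lemma ceq {a b : ℤ} (h : (d : ℤ) ∣ a - b) : ((a : Fin d)) = (b : Fin d) := (ciff a b).2 h

lemma cne {a b : ℤ} (h : ¬ (d : ℤ) ∣ a - b) : ((a : Fin d)) ≠ (b : Fin d) :=
  fun hc => h ((ciff a b).1 hc)

lemma cc {a b : ℤ} (h : a = b) : ((a : Fin d)) = (b : Fin d) := by rw [h]

lemma ndvd {x : ℤ} (h0 : x ≠ 0) (h1 : -(d:ℤ) < x) (h2 : x < d) : ¬ (d:ℤ) ∣ x := by
  intro h
  have hd0 : (0:ℤ) < (d:ℤ) := by exact_mod_cast (NeZero.pos d)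
  rcases h with ⟨k, hk⟩
  subst hk
  rcases lt_trichotomy k 0 with hlt | he | hgt
  · nlinarith
  · subst he; simp at h0
  · nlinarith

lemma ck (k : ℕ) (hk : k < d) : (((k : ℤ) : Fin d)) = ⟨k, hk⟩ := by
  push_cast
  exact Fin.ext (by simp [Fin.val_cast_of_lt hk])

lemma g_zero (t : ℤ) (v : EuclideanSpace ℝ (Fin d)) : g 0 t v = v ((t : Fin d)) := by
  show formalDeriv _ _ _ 0 v ((t : Fin d)) = _
  rw [formalDeriv]

lemma g_one (t : ℤ) (v : EuclideanSpace ℝ (Fin d)) :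
    g 1 t v = 8 - v ((t : Fin d)) + v (((t-1 : ℤ) : Fin d)) * v (((t+1 : ℤ) : Fin d))
      - v (((t-2 : ℤ) : Fin d)) * v (((t-1 : ℤ) : Fin d)) := by
  have h1 : ((t : Fin d)) - 1 = (((t-1 : ℤ) : Fin d)) := by push_cast; ring
  have h2 : ((t : Fin d)) + 1 = (((t+1 : ℤ) : Fin d)) := by push_cast; ring
  have h3 : ((t : Fin d)) - 2 = (((t-2 : ℤ) : Fin d)) := by push_cast; ring
  have hD : D 1 v = lorenz96f d - v - lorenz96B d v v := by
    show formalDeriv _ _ _ 1 v = _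
    rw [formalDeriv]
  show D 1 v ((t : Fin d)) = _
  rw [hD]
  show (8:ℝ) - v ((t:Fin d)) - (-(1/2) * (v ((t:Fin d) - 1) * v ((t:Fin d) + 1)
    + v ((t:Fin d) - 1) * v ((t:Fin d) + 1) - v ((t:Fin d) - 2) * v ((t:Fin d) - 1)
    - v ((t:Fin d) - 2) * v ((t:Fin d) - 1))) = _
  rw [h1, h2, h3]; ring

lemma gRec (i : ℕ) (t : ℤ) (v : EuclideanSpace ℝ (Fin d)) :
    g (i+2) t v = -(g (i+1) t v) + ∑ j ∈ Finset.range (i+2), (((i+1).choose j : ℝ) / 2) *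
      (g (i+1-j) (t-1) v * g j (t+1) v + g j (t-1) v * g (i+1-j) (t+1) v
        - g (i+1-j) (t-2) v * g j (t-1) v - g j (t-2) v * g (i+1-j) (t-1) v) := by
  have h1 : ((t : Fin d)) - 1 = (((t-1 : ℤ) : Fin d)) := by push_cast; ring
  have h2 : ((t : Fin d)) + 1 = (((t+1 : ℤ) : Fin d)) := by push_cast; ring
  have h3 : ((t : Fin d)) - 2 = (((t-2 : ℤ) : Fin d)) := by push_cast; ring
  have hD : D (i+2) v = -(D (i+1) v) - ∑ j ∈ (Finset.range (i + 2)).attach,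
      ((i + 1).choose j.1 : ℝ) • lorenz96B d (D j.1 v) (D (i + 1 - j.1) v) := by
    show formalDeriv _ _ _ (i+2) v = _
    rw [formalDeriv]
    rfl
  show D (i+2) v ((t : Fin d)) = _
  rw [hD]
  show -(D (i+1) v ((t:Fin d))) - (∑ j ∈ (Finset.range (i + 2)).attach,
      ((i + 1).choose j.1 : ℝ) • lorenz96B d (D j.1 v) (D (i + 1 - j.1) v)) ((t:Fin d)) = _
  rw [WithLp.ofLp_sum, Finset.sum_apply]
  have hB : ∀ j ∈ (Finset.range (i+2)).attach,
      (((i + 1).choose j.1 : ℝ) • lorenz96B d (D j.1 v) (D (i + 1 - j.1) v)) ((t:Fin d))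
      = -((((i+1).choose j.1 : ℝ) / 2) *
        (g (i+1-j.1) (t-1) v * g j.1 (t+1) v + g j.1 (t-1) v * g (i+1-j.1) (t+1) v
          - g (i+1-j.1) (t-2) v * g j.1 (t-1) v - g j.1 (t-2) v * g (i+1-j.1) (t-1) v)) := by
    intro j _
    show ((i + 1).choose j.1 : ℝ) * (-(1/2) * (D (i+1-j.1) v ((t:Fin d) - 1) * D j.1 v ((t:Fin d)+1)
      + D j.1 v ((t:Fin d)-1) * D (i+1-j.1) v ((t:Fin d)+1)
      - D (i+1-j.1) v ((t:Fin d)-2) * D j.1 v ((t:Fin d)-1)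
      - D j.1 v ((t:Fin d)-2) * D (i+1-j.1) v ((t:Fin d)-1))) = _
    rw [h1, h2, h3]
    show ((i + 1).choose j.1 : ℝ) * (-(1/2) * (g (i+1-j.1) (t-1) v * g j.1 (t+1) v
      + g j.1 (t-1) v * g (i+1-j.1) (t+1) v
      - g (i+1-j.1) (t-2) v * g j.1 (t-1) v
      - g j.1 (t-2) v * g (i+1-j.1) (t-1) v)) = _
    ring
  rw [Finset.sum_congr rfl hB]
  rw [Finset.sum_attach (Finset.range (i+2)) (fun j => -((((i+1).choose j : ℝ) / 2) *
      (g (i+1-j) (t-1) v * g j (t+1) v + g j (t-1) v * g (i+1-j) (t+1) v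
        - g (i+1-j) (t-2) v * g j (t-1) v - g j (t-2) v * g (i+1-j) (t-1) v)))]
  have hg1 : D (i+1) v ((t:Fin d)) = g (i+1) t v := rfl
  rw [hg1, Finset.sum_neg_distrib]
  ring

lemma g_local (i : ℕ) : ∀ (t : ℤ) (v v' : EuclideanSpace ℝ (Fin d)),
    (∀ s : ℤ, t - 2*i ≤ s → s ≤ t + i → v ((s : Fin d)) = v' ((s : Fin d))) →
    g i t v = g i t v' := by
  induction i using Nat.strong_induction_on with
  | _ i IH =>
    match i, IH with
    | 0, _ =>
      intro t v v' h
      rw [g_zero, g_zero]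
      exact h t (by omega) (by omega)
    | 1, _ =>
      intro t v v' h
      rw [g_one, g_one, h t (by omega) (by omega), h (t-1) (by omega) (by omega),
          h (t+1) (by omega) (by omega), h (t-2) (by omega) (by omega)]
    | (i+2), IH =>
      intro t v v' h
      rw [gRec, gRec]
      have key : ∀ (j : ℕ) (s : ℤ), j ≤ i+1 → t-2 ≤ s → s ≤ t+1 → g j s v = g j s v' := by
        intro j s hj hs1 hs2
        exact IH j (by omega) s v v' (fun s' h1 h2 => h s' (by omega) (by omega))
      rw [key (i+1) t (by omega) (by omega) (by omega)]
      congr 1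
      refine Finset.sum_congr rfl (fun j hj => ?_)
      have hj' := Finset.mem_range.mp hj
      rw [key (i+1-j) (t-1) (by omega) (by omega) (by omega),
          key j (t+1) (by omega) (by omega) (by omega),
          key j (t-1) (by omega) (by omega) (by omega),
          key (i+1-j) (t+1) (by omega) (by omega) (by omega),
          key (i+1-j) (t-2) (by omega) (by omega) (by omega),
          key j (t-2) (by omega) (by omega) (by omega)]

lemma g_update_ne (a : ℕ) (s e : ℤ) (v : EuclideanSpace ℝ (Fin d)) (y : ℝ)
    (h : ∀ s' : ℤ, s - 2*a ≤ s' → s' ≤ s + a → ¬ (d:ℤ) ∣ (s' - e)) :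
    g a s (upd v ((e : Fin d)) y) = g a s v :=
  g_local a s _ v (fun s' h1 h2 => upd_of_ne (cne (h s' h1 h2)) _ _)

lemma g_down : ∀ (i : ℕ), 1 ≤ i → 3*i < d → ∀ (t e : ℤ), e = t - 2*i →
    ∀ (v : EuclideanSpace ℝ (Fin d)) (y : ℝ),
    g i t (upd v ((e : Fin d)) y)
      = g i t v + (∏ k ∈ Finset.range i, -(v (((t - 1 - 2*(k:ℤ) : ℤ) : Fin d)))) *
          (y - v ((e : Fin d))) := by
  intro i
  induction i using Nat.strong_induction_on with
  | _ i IH =>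
  match i, IH with
  | 0, _ => exact fun h0 => absurd h0 (by omega)
  | 1, _ =>
    intro _ h3 t e he v y
    rw [g_one, g_one]
    rw [cc (show t-2 = e by omega)]
    rw [upd_self]
    rw [upd_of_ne (show ((t : Fin d)) ≠ ((e : Fin d)) from
          cne (ndvd (by omega) (by omega) (by omega)))]
    rw [upd_of_ne (show (((t-1 : ℤ) : Fin d)) ≠ ((e : Fin d)) from
          cne (ndvd (by omega) (by omega) (by omega)))]
    rw [upd_of_ne (show (((t+1 : ℤ) : Fin d)) ≠ ((e : Fin d)) from
          cne (ndvd (by omega) (by omega) (by omega)))]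
    rw [Finset.prod_range_one]
    rw [cc (show t - 1 - 2*((0:ℕ):ℤ) = t-1 by push_cast; ring)]
    ring
  | (i+2), IH =>
    intro _ h3 t e he v y
    rw [gRec, gRec]
    have H1 : g (i+1) t (upd v ((e : Fin d)) y) = g (i+1) t v :=
      g_update_ne (i+1) t e v y (fun s' h1 h2 => ndvd (by omega) (by omega) (by omega))
    have HIH := IH (i+1) (by omega) (by omega) (by omega) (t-2) e (by push_cast [he]; ring) v y
    set Q : ℝ := ∏ k ∈ Finset.range (i+1), -(v (((t - 2 - 1 - 2*(k:ℤ) : ℤ) : Fin d))) with hQ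
    set ex : ℝ := -(1/2 * (v (((t-1:ℤ) : Fin d)) * (Q * (y - v ((e : Fin d)))))) with hex
    have hjj : ∀ j ∈ Finset.range (i+2),
        (((i+1).choose j : ℝ) / 2) *
          (g (i+1-j) (t-1) (upd v ((e : Fin d)) y) * g j (t+1) (upd v ((e : Fin d)) y)
            + g j (t-1) (upd v ((e : Fin d)) y) * g (i+1-j) (t+1) (upd v ((e : Fin d)) y)
            - g (i+1-j) (t-2) (upd v ((e : Fin d)) y) * g j (t-1) (upd v ((e : Fin d)) y)
            - g j (t-2) (upd v ((e : Fin d)) y) * g (i+1-j) (t-1) (upd v ((e : Fin d)) y))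
        = (((i+1).choose j : ℝ) / 2) *
          (g (i+1-j) (t-1) v * g j (t+1) v + g j (t-1) v * g (i+1-j) (t+1) v
            - g (i+1-j) (t-2) v * g j (t-1) v - g j (t-2) v * g (i+1-j) (t-1) v)
          + ((if j = 0 then ex else 0) + (if j = i+1 then ex else 0)) := by
      intro j hj
      have hj' := Finset.mem_range.mp hj
      by_cases hj0 : j = 0
      · subst hj0
        rw [if_pos rfl, if_neg (by omega)]
        simp only [Nat.sub_zero, Nat.choose_zero_right, Nat.cast_one, g_zero]
        rw [upd_of_ne (show (((t+1 : ℤ) : Fin d)) ≠ ((e : Fin d)) from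
              cne (ndvd (by omega) (by omega) (by omega)))]
        rw [upd_of_ne (show (((t-1 : ℤ) : Fin d)) ≠ ((e : Fin d)) from
              cne (ndvd (by omega) (by omega) (by omega)))]
        rw [upd_of_ne (show (((t-2 : ℤ) : Fin d)) ≠ ((e : Fin d)) from
              cne (ndvd (by omega) (by omega) (by omega)))]
        rw [g_update_ne (i+1) (t-1) e v y (fun s' h1 h2 => ndvd (by omega) (by omega) (by omega))]
        rw [g_update_ne (i+1) (t+1) e v y (fun s' h1 h2 => ndvd (by omega) (by omega) (by omega))]
        rw [HIH]
        rw [hex]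
        ring
      · by_cases hj1 : j = i+1
        · subst hj1
          rw [if_neg hj0, if_pos rfl]
          simp only [Nat.sub_self, Nat.choose_self, Nat.cast_one, g_zero]
          rw [upd_of_ne (show (((t+1 : ℤ) : Fin d)) ≠ ((e : Fin d)) from
                cne (ndvd (by omega) (by omega) (by omega)))]
          rw [upd_of_ne (show (((t-1 : ℤ) : Fin d)) ≠ ((e : Fin d)) from
                cne (ndvd (by omega) (by omega) (by omega)))]
          rw [upd_of_ne (show (((t-2 : ℤ) : Fin d)) ≠ ((e : Fin d)) from
                cne (ndvd (by omega) (by omega) (by omega)))]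
          rw [g_update_ne (i+1) (t-1) e v y (fun s' h1 h2 => ndvd (by omega) (by omega) (by omega))]
          rw [g_update_ne (i+1) (t+1) e v y (fun s' h1 h2 => ndvd (by omega) (by omega) (by omega))]
          rw [HIH]
          rw [hex]
          ring
        · rw [if_neg hj0, if_neg hj1]
          rw [g_update_ne j (t+1) e v y (fun s' h1 h2 => ndvd (by omega) (by omega) (by omega))]
          rw [g_update_ne j (t-1) e v y (fun s' h1 h2 => ndvd (by omega) (by omega) (by omega))]
          rw [g_update_ne j (t-2) e v y (fun s' h1 h2 => ndvd (by omega) (by omega) (by omega))]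
          rw [g_update_ne (i+1-j) (t-1) e v y (fun s' h1 h2 => ndvd (by omega) (by omega) (by omega))]
          rw [g_update_ne (i+1-j) (t+1) e v y (fun s' h1 h2 => ndvd (by omega) (by omega) (by omega))]
          rw [g_update_ne (i+1-j) (t-2) e v y (fun s' h1 h2 => ndvd (by omega) (by omega) (by omega))]
          ring
    rw [Finset.sum_congr rfl hjj]
    rw [Finset.sum_add_distrib, Finset.sum_add_distrib,
        Finset.sum_ite_eq' (Finset.range (i+2)) 0 (fun _ => ex),
        Finset.sum_ite_eq' (Finset.range (i+2)) (i+1) (fun _ => ex)]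
    rw [if_pos (Finset.mem_range.mpr (by omega)), if_pos (Finset.mem_range.mpr (by omega))]
    rw [H1]
    have hprod : (∏ k ∈ Finset.range (i+2), -(v (((t - 1 - 2*(k:ℤ) : ℤ) : Fin d))))
        = Q * -(v (((t-1:ℤ) : Fin d))) := by
      rw [Finset.prod_range_succ']
      congr 1
      · rw [hQ]
        refine Finset.prod_congr rfl (fun k _ => ?_)
        rw [cc (show t - 1 - 2*(((k+1:ℕ)):ℤ) = t - 2 - 1 - 2*(k:ℤ) by push_cast; ring)]
      · rw [cc (show t - 1 - 2*((0:ℕ):ℤ) = t-1 by push_cast; ring)]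
    rw [hprod, hex]
    ring

lemma g_up : ∀ (i : ℕ), 1 ≤ i → 3*i < d → ∀ (t e : ℤ), e = t + i →
    ∀ (v : EuclideanSpace ℝ (Fin d)) (y : ℝ),
    g i t (upd v ((e : Fin d)) y)
      = g i t v + (∏ k ∈ Finset.range i, v (((t - 1 + (k:ℤ) : ℤ) : Fin d))) *
          (y - v ((e : Fin d))) := by
  intro i
  induction i using Nat.strong_induction_on with
  | _ i IH =>
  match i, IH with
  | 0, _ => exact fun h0 => absurd h0 (by omega)
  | 1, _ =>
    intro _ h3 t e he v y
    rw [g_one, g_one]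
    rw [cc (show t+1 = e by omega)]
    rw [upd_self]
    rw [upd_of_ne (show ((t : Fin d)) ≠ ((e : Fin d)) from
          cne (ndvd (by omega) (by omega) (by omega)))]
    rw [upd_of_ne (show (((t-1 : ℤ) : Fin d)) ≠ ((e : Fin d)) from
          cne (ndvd (by omega) (by omega) (by omega)))]
    rw [upd_of_ne (show (((t-2 : ℤ) : Fin d)) ≠ ((e : Fin d)) from
          cne (ndvd (by omega) (by omega) (by omega)))]
    rw [Finset.prod_range_one]
    rw [cc (show t - 1 + ((0:ℕ):ℤ) = t-1 by push_cast; ring)]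
    ring
  | (i+2), IH =>
    intro _ h3 t e he v y
    rw [gRec, gRec]
    have H1 : g (i+1) t (upd v ((e : Fin d)) y) = g (i+1) t v :=
      g_update_ne (i+1) t e v y (fun s' h1 h2 => ndvd (by omega) (by omega) (by omega))
    have HIH := IH (i+1) (by omega) (by omega) (by omega) (t+1) e (by push_cast [he]; ring) v y
    set Q : ℝ := ∏ k ∈ Finset.range (i+1), v (((t + 1 - 1 + (k:ℤ) : ℤ) : Fin d)) with hQ
    set ex : ℝ := 1/2 * (v (((t-1:ℤ) : Fin d)) * (Q * (y - v ((e : Fin d))))) with hex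
    have hjj : ∀ j ∈ Finset.range (i+2),
        (((i+1).choose j : ℝ) / 2) *
          (g (i+1-j) (t-1) (upd v ((e : Fin d)) y) * g j (t+1) (upd v ((e : Fin d)) y)
            + g j (t-1) (upd v ((e : Fin d)) y) * g (i+1-j) (t+1) (upd v ((e : Fin d)) y)
            - g (i+1-j) (t-2) (upd v ((e : Fin d)) y) * g j (t-1) (upd v ((e : Fin d)) y)
            - g j (t-2) (upd v ((e : Fin d)) y) * g (i+1-j) (t-1) (upd v ((e : Fin d)) y))
        = (((i+1).choose j : ℝ) / 2) *
          (g (i+1-j) (t-1) v * g j (t+1) v + g j (t-1) v * g (i+1-j) (t+1) v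
            - g (i+1-j) (t-2) v * g j (t-1) v - g j (t-2) v * g (i+1-j) (t-1) v)
          + ((if j = 0 then ex else 0) + (if j = i+1 then ex else 0)) := by
      intro j hj
      have hj' := Finset.mem_range.mp hj
      by_cases hj0 : j = 0
      · subst hj0
        rw [if_pos rfl, if_neg (by omega)]
        simp only [Nat.sub_zero, Nat.choose_zero_right, Nat.cast_one, g_zero]
        rw [upd_of_ne (show (((t+1 : ℤ) : Fin d)) ≠ ((e : Fin d)) from
              cne (ndvd (by omega) (by omega) (by omega)))]
        rw [upd_of_ne (show (((t-1 : ℤ) : Fin d)) ≠ ((e : Fin d)) from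
              cne (ndvd (by omega) (by omega) (by omega)))]
        rw [upd_of_ne (show (((t-2 : ℤ) : Fin d)) ≠ ((e : Fin d)) from
              cne (ndvd (by omega) (by omega) (by omega)))]
        rw [g_update_ne (i+1) (t-1) e v y (fun s' h1 h2 => ndvd (by omega) (by omega) (by omega))]
        rw [g_update_ne (i+1) (t-2) e v y (fun s' h1 h2 => ndvd (by omega) (by omega) (by omega))]
        rw [HIH]
        rw [hex]
        ring
      · by_cases hj1 : j = i+1
        · subst hj1
          rw [if_neg hj0, if_pos rfl]
          simp only [Nat.sub_self, Nat.choose_self, Nat.cast_one, g_zero]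
          rw [upd_of_ne (show (((t+1 : ℤ) : Fin d)) ≠ ((e : Fin d)) from
                cne (ndvd (by omega) (by omega) (by omega)))]
          rw [upd_of_ne (show (((t-1 : ℤ) : Fin d)) ≠ ((e : Fin d)) from
                cne (ndvd (by omega) (by omega) (by omega)))]
          rw [upd_of_ne (show (((t-2 : ℤ) : Fin d)) ≠ ((e : Fin d)) from
                cne (ndvd (by omega) (by omega) (by omega)))]
          rw [g_update_ne (i+1) (t-1) e v y (fun s' h1 h2 => ndvd (by omega) (by omega) (by omega))]
          rw [g_update_ne (i+1) (t-2) e v y (fun s' h1 h2 => ndvd (by omega) (by omega) (by omega))]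
          rw [HIH]
          rw [hex]
          ring
        · rw [if_neg hj0, if_neg hj1]
          rw [g_update_ne j (t+1) e v y (fun s' h1 h2 => ndvd (by omega) (by omega) (by omega))]
          rw [g_update_ne j (t-1) e v y (fun s' h1 h2 => ndvd (by omega) (by omega) (by omega))]
          rw [g_update_ne j (t-2) e v y (fun s' h1 h2 => ndvd (by omega) (by omega) (by omega))]
          rw [g_update_ne (i+1-j) (t-1) e v y (fun s' h1 h2 => ndvd (by omega) (by omega) (by omega))]
          rw [g_update_ne (i+1-j) (t+1) e v y (fun s' h1 h2 => ndvd (by omega) (by omega) (by omega))]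
          rw [g_update_ne (i+1-j) (t-2) e v y (fun s' h1 h2 => ndvd (by omega) (by omega) (by omega))]
          ring
    rw [Finset.sum_congr rfl hjj]
    rw [Finset.sum_add_distrib, Finset.sum_add_distrib,
        Finset.sum_ite_eq' (Finset.range (i+2)) 0 (fun _ => ex),
        Finset.sum_ite_eq' (Finset.range (i+2)) (i+1) (fun _ => ex)]
    rw [if_pos (Finset.mem_range.mpr (by omega)), if_pos (Finset.mem_range.mpr (by omega))]
    rw [H1]
    have hprod : (∏ k ∈ Finset.range (i+2), v (((t - 1 + (k:ℤ) : ℤ) : Fin d)))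
        = Q * v (((t-1:ℤ) : Fin d)) := by
      rw [Finset.prod_range_succ']
      congr 1
      · rw [hQ]
        refine Finset.prod_congr rfl (fun k _ => ?_)
        rw [cc (show t - 1 + (((k+1:ℕ)):ℤ) = t + 1 - 1 + (k:ℤ) by push_cast; ring)]
      · rw [cc (show t - 1 + ((0:ℕ):ℤ) = t-1 by push_cast; ring)]
    rw [hprod, hex]
    ring

lemma g_diff (i : ℕ) : ∀ t : ℤ, Differentiable ℝ (g (d := d) i t) := by
  induction i using Nat.strong_induction_on with
  | _ i IH =>
  match i, IH with
  | 0, _ =>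
    intro t
    have hfun : g (d := d) 0 t = fun v => v ((t : Fin d)) := funext fun v => g_zero t v
    rw [hfun]
    exact (EuclideanSpace.proj ((t : Fin d)) : EuclideanSpace ℝ (Fin d) →L[ℝ] ℝ).differentiable
  | 1, _ =>
    intro t
    have hfun : g (d := d) 1 t = fun v => 8 - v ((t : Fin d))
        + v (((t-1 : ℤ) : Fin d)) * v (((t+1 : ℤ) : Fin d))
        - v (((t-2 : ℤ) : Fin d)) * v (((t-1 : ℤ) : Fin d)) := funext fun v => g_one t v
    rw [hfun]
    have hp : ∀ s : ℤ, Differentiable ℝ (fun v : EuclideanSpace ℝ (Fin d) => v ((s : Fin d))) :=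
      fun s => (EuclideanSpace.proj ((s : Fin d)) : EuclideanSpace ℝ (Fin d) →L[ℝ] ℝ).differentiable
    exact (((differentiable_const (8:ℝ)).sub (hp t)).add ((hp (t-1)).mul (hp (t+1)))).sub
      ((hp (t-2)).mul (hp (t-1)))
  | (i+2), IH =>
    intro t
    have hfun : g (d := d) (i+2) t = fun v => -(g (i+1) t v)
        + ∑ j ∈ Finset.range (i+2), (((i+1).choose j : ℝ) / 2) *
          (g (i+1-j) (t-1) v * g j (t+1) v + g j (t-1) v * g (i+1-j) (t+1) v
            - g (i+1-j) (t-2) v * g j (t-1) v - g j (t-2) v * g (i+1-j) (t-1) v) :=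
      funext fun v => gRec i t v
    rw [hfun]
    refine Differentiable.add (IH (i+1) (by omega) t).neg ?_
    refine Differentiable.fun_sum (fun j hj => ?_)
    have hj' := Finset.mem_range.mp hj
    exact (((((IH (i+1-j) (by omega) (t-1)).mul (IH j (by omega) (t+1))).add
      ((IH j (by omega) (t-1)).mul (IH (i+1-j) (by omega) (t+1)))).sub
      ((IH (i+1-j) (by omega) (t-2)).mul (IH j (by omega) (t-1)))).sub
      ((IH j (by omega) (t-2)).mul (IH (i+1-j) (by omega) (t-1)))).const_mul _

lemma fderiv_single_of_affine {h : EuclideanSpace ℝ (Fin d) → ℝ} {u : EuclideanSpace ℝ (Fin d)}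
    (hdiff : DifferentiableAt ℝ h u) (x : Fin d) (Cc : ℝ)
    (haff : ∀ y : ℝ, h (upd u x y) = h u + Cc * (y - u x)) :
    fderiv ℝ h u (EuclideanSpace.single x 1) = Cc := by
  set b : EuclideanSpace ℝ (Fin d) := EuclideanSpace.single x 1 with hb
  have hline : HasDerivAt (fun s : ℝ => u + s • b) b 0 := by
    simpa using ((hasDerivAt_id (0:ℝ)).smul_const b).const_add u
  have hu0 : HasFDerivAt h (fderiv ℝ h u) (u + (0:ℝ) • b) := by
    rw [show u + (0:ℝ) • b = u by simp]
    exact hdiff.hasFDerivAt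
  have hcomp : HasDerivAt (fun s : ℝ => h (u + s • b)) (fderiv ℝ h u b) 0 :=
    hu0.comp_hasDerivAt 0 hline
  have heq : (fun s : ℝ => h (u + s • b)) = fun s => h u + Cc * s := by
    funext s
    have hupd : u + s • b = upd u x (u x + s) := by
      ext j
      by_cases hj : j = x
      · subst hj
        simp [hb, EuclideanSpace.single_apply, upd_self]
      · simp [hb, EuclideanSpace.single_apply, hj, upd_of_ne hj]
    rw [hupd, haff]
    ring
  rw [heq] at hcomp
  have h2 : HasDerivAt (fun s : ℝ => h u + Cc * s) Cc 0 := by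
    simpa using ((hasDerivAt_id (0:ℝ)).const_mul Cc).const_add (h u)
  exact hcomp.unique h2

lemma basis_expand (w : EuclideanSpace ℝ (Fin d)) :
    ∑ x : Fin d, w x • EuclideanSpace.single x (1:ℝ) = w := by
  ext j
  rw [WithLp.ofLp_sum, Finset.sum_apply]
  have : ∀ x : Fin d, (w x • EuclideanSpace.single x (1:ℝ)) j = if j = x then w x else 0 := by
    intro x
    show w x * EuclideanSpace.single x (1:ℝ) j = _
    rw [EuclideanSpace.single_apply]
    by_cases hj : j = x <;> simp [hj]
  rw [Finset.sum_congr rfl (fun x _ => this x)]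
  simp

lemma fderiv_expand {h : EuclideanSpace ℝ (Fin d) → ℝ} {u : EuclideanSpace ℝ (Fin d)}
    (hdiff : DifferentiableAt ℝ h u) (w : EuclideanSpace ℝ (Fin d)) :
    fderiv ℝ h u w = ∑ x : Fin d, w x * fderiv ℝ h u (EuclideanSpace.single x 1) := by
  conv_lhs => rw [← basis_expand w]
  rw [map_sum]
  refine Finset.sum_congr rfl (fun x _ => ?_)
  rw [(fderiv ℝ h u).map_smul]
  rfl

lemma step_down (u v : EuclideanSpace ℝ (Fin d)) (hu : ∀ m : Fin d, u m ≠ 0)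
    (i : ℕ) (h3 : 3*(i+1) < d) (t e : ℤ) (he : e = t - 2*((i:ℤ)+1))
    (hobs : g (i+1) t v = g (i+1) t u)
    (hprev : ∀ s : ℤ, t - 2*((i:ℤ)+1) + 1 ≤ s → s ≤ t + ((i:ℤ)+1) →
      v ((s : Fin d)) = u ((s : Fin d))) :
    v ((e : Fin d)) = u ((e : Fin d)) := by
  set w : EuclideanSpace ℝ (Fin d) := upd v ((e : Fin d)) (u ((e : Fin d))) with hw
  have hwu : g (i+1) t w = g (i+1) t u := by
    refine g_local (i+1) t w u (fun s hs1 hs2 => ?_)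
    by_cases hdv : (d:ℤ) ∣ s - e
    · rw [ceq hdv, hw, upd_self]
    · have hse : s ≠ e := fun hc => hdv (by rw [hc]; simp)
      rw [hw, upd_of_ne (cne hdv)]
      exact hprev s (by omega) (by omega)
  have hveq : upd w ((e : Fin d)) (v ((e : Fin d))) = v := by
    rw [hw, upd_idem]
    exact upd_eq_self _ v
  have hgd := g_down (i+1) (by omega) h3 t e (by push_cast [he]; ring) w (v ((e : Fin d)))
  rw [hveq] at hgd
  have hwe : w ((e : Fin d)) = u ((e : Fin d)) := by rw [hw, upd_self]
  rw [hwu, hwe, hobs] at hgd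
  have hP : (∏ k ∈ Finset.range (i+1), -(w (((t - 1 - 2*(k:ℤ) : ℤ) : Fin d)))) ≠ 0 := by
    refine Finset.prod_ne_zero_iff.mpr (fun k hk => ?_)
    have hk' := Finset.mem_range.mp hk
    have hne : (((t - 1 - 2*(k:ℤ) : ℤ)) : Fin d) ≠ ((e : Fin d)) :=
      cne (ndvd (by omega) (by omega) (by omega))
    rw [hw, upd_of_ne hne, hprev (t - 1 - 2*(k:ℤ)) (by omega) (by omega)]
    exact neg_ne_zero.mpr (hu _)
  have h0 : (∏ k ∈ Finset.range (i+1), -(w (((t - 1 - 2*(k:ℤ) : ℤ) : Fin d)))) *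
      (v ((e : Fin d)) - u ((e : Fin d))) = 0 := by linarith
  rcases mul_eq_zero.mp h0 with h | h
  · exact absurd h hP
  · linarith

lemma step_up (u v : EuclideanSpace ℝ (Fin d)) (hu : ∀ m : Fin d, u m ≠ 0)
    (i : ℕ) (h3 : 3*(i+1) < d) (t e : ℤ) (he : e = t + ((i:ℤ)+1))
    (hobs : g (i+1) t v = g (i+1) t u)
    (hprev : ∀ s : ℤ, t - 2*((i:ℤ)+1) ≤ s → s ≤ t + (i:ℤ) →
      v ((s : Fin d)) = u ((s : Fin d))) :
    v ((e : Fin d)) = u ((e : Fin d)) := by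
  set w : EuclideanSpace ℝ (Fin d) := upd v ((e : Fin d)) (u ((e : Fin d))) with hw
  have hwu : g (i+1) t w = g (i+1) t u := by
    refine g_local (i+1) t w u (fun s hs1 hs2 => ?_)
    by_cases hdv : (d:ℤ) ∣ s - e
    · rw [ceq hdv, hw, upd_self]
    · have hse : s ≠ e := fun hc => hdv (by rw [hc]; simp)
      rw [hw, upd_of_ne (cne hdv)]
      exact hprev s (by omega) (by omega)
  have hveq : upd w ((e : Fin d)) (v ((e : Fin d))) = v := by
    rw [hw, upd_idem]
    exact upd_eq_self _ v
  have hgd := g_up (i+1) (by omega) h3 t e (by push_cast [he]; ring) w (v ((e : Fin d)))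
  rw [hveq] at hgd
  have hwe : w ((e : Fin d)) = u ((e : Fin d)) := by rw [hw, upd_self]
  rw [hwu, hwe, hobs] at hgd
  have hP : (∏ k ∈ Finset.range (i+1), w (((t - 1 + (k:ℤ) : ℤ) : Fin d))) ≠ 0 := by
    refine Finset.prod_ne_zero_iff.mpr (fun k hk => ?_)
    have hk' := Finset.mem_range.mp hk
    have hne : (((t - 1 + (k:ℤ) : ℤ)) : Fin d) ≠ ((e : Fin d)) :=
      cne (ndvd (by omega) (by omega) (by omega))
    rw [hw, upd_of_ne hne, hprev (t - 1 + (k:ℤ)) (by omega) (by omega)]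
    exact hu _
  have h0 : (∏ k ∈ Finset.range (i+1), w (((t - 1 + (k:ℤ) : ℤ) : Fin d))) *
      (v ((e : Fin d)) - u ((e : Fin d))) = 0 := by linarith
  rcases mul_eq_zero.mp h0 with h | h
  · exact absurd h hP
  · linarith

lemma span_step_down (u w : EuclideanSpace ℝ (Fin d)) (hu : ∀ m : Fin d, u m ≠ 0)
    (i : ℕ) (h3 : 3*(i+1) < d) (t e : ℤ) (he : e = t - 2*((i:ℤ)+1))
    (hobs : fderiv ℝ (g (i+1) t) u w = 0)
    (hprev : ∀ s : ℤ, t - 2*((i:ℤ)+1) + 1 ≤ s → s ≤ t + ((i:ℤ)+1) → w ((s : Fin d)) = 0) :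
    w ((e : Fin d)) = 0 := by
  have hdiff := (g_diff (d := d) (i+1) t).differentiableAt (x := u)
  rw [fderiv_expand hdiff w] at hobs
  have hsingle : ∀ x : Fin d, x ≠ ((e : Fin d)) →
      w x * fderiv ℝ (g (i+1) t) u (EuclideanSpace.single x 1) = 0 := by
    intro x hx
    by_cases hex : ∃ s : ℤ, t - 2*((i:ℤ)+1) + 1 ≤ s ∧ s ≤ t + ((i:ℤ)+1) ∧ ((s : Fin d)) = x
    · obtain ⟨s, hs1, hs2, hs3⟩ := hex
      rw [← hs3, hprev s hs1 hs2, zero_mul]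
    · have hpz : fderiv ℝ (g (i+1) t) u (EuclideanSpace.single x 1) = 0 := by
        refine fderiv_single_of_affine hdiff x 0 (fun y => ?_)
        rw [zero_mul, add_zero]
        refine g_local (i+1) t _ u (fun s hs1 hs2 => ?_)
        refine upd_of_ne ?_ _ _
        by_cases hdv : (d:ℤ) ∣ s - e
        · rw [ceq hdv]; exact Ne.symm hx
        · have hse : s ≠ e := fun hc => hdv (by rw [hc]; simp)
          intro hc
          exact hex ⟨s, by omega, by omega, hc⟩
      rw [hpz, mul_zero]
  have hsum : ∑ x : Fin d, w x * fderiv ℝ (g (i+1) t) u (EuclideanSpace.single x 1)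
      = w ((e : Fin d)) * fderiv ℝ (g (i+1) t) u (EuclideanSpace.single ((e : Fin d)) 1) :=
    Finset.sum_eq_single_of_mem _ (Finset.mem_univ _) (fun x _ hx => hsingle x hx)
  rw [hsum] at hobs
  have hC : fderiv ℝ (g (i+1) t) u (EuclideanSpace.single ((e : Fin d)) 1)
      = ∏ k ∈ Finset.range (i+1), -(u (((t - 1 - 2*(k:ℤ) : ℤ) : Fin d))) :=
    fderiv_single_of_affine hdiff _ _
      (fun y => g_down (i+1) (by omega) h3 t e (by push_cast [he]; ring) u y)
  rw [hC] at hobs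
  have hP : (∏ k ∈ Finset.range (i+1), -(u (((t - 1 - 2*(k:ℤ) : ℤ) : Fin d)))) ≠ 0 :=
    Finset.prod_ne_zero_iff.mpr (fun k _ => neg_ne_zero.mpr (hu _))
  rcases mul_eq_zero.mp hobs with h | h
  · exact h
  · exact absurd h hP

lemma span_step_up (u w : EuclideanSpace ℝ (Fin d)) (hu : ∀ m : Fin d, u m ≠ 0)
    (i : ℕ) (h3 : 3*(i+1) < d) (t e : ℤ) (he : e = t + ((i:ℤ)+1))
    (hobs : fderiv ℝ (g (i+1) t) u w = 0)
    (hprev : ∀ s : ℤ, t - 2*((i:ℤ)+1) ≤ s → s ≤ t + (i:ℤ) → w ((s : Fin d)) = 0) :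
    w ((e : Fin d)) = 0 := by
  have hdiff := (g_diff (d := d) (i+1) t).differentiableAt (x := u)
  rw [fderiv_expand hdiff w] at hobs
  have hsingle : ∀ x : Fin d, x ≠ ((e : Fin d)) →
      w x * fderiv ℝ (g (i+1) t) u (EuclideanSpace.single x 1) = 0 := by
    intro x hx
    by_cases hex : ∃ s : ℤ, t - 2*((i:ℤ)+1) ≤ s ∧ s ≤ t + (i:ℤ) ∧ ((s : Fin d)) = x
    · obtain ⟨s, hs1, hs2, hs3⟩ := hex
      rw [← hs3, hprev s hs1 hs2, zero_mul]
    · have hpz : fderiv ℝ (g (i+1) t) u (EuclideanSpace.single x 1) = 0 := by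
        refine fderiv_single_of_affine hdiff x 0 (fun y => ?_)
        rw [zero_mul, add_zero]
        refine g_local (i+1) t _ u (fun s hs1 hs2 => ?_)
        refine upd_of_ne ?_ _ _
        by_cases hdv : (d:ℤ) ∣ s - e
        · rw [ceq hdv]; exact Ne.symm hx
        · have hse : s ≠ e := fun hc => hdv (by rw [hc]; simp)
          intro hc
          exact hex ⟨s, by omega, by omega, hc⟩
      rw [hpz, mul_zero]
  have hsum : ∑ x : Fin d, w x * fderiv ℝ (g (i+1) t) u (EuclideanSpace.single x 1)
      = w ((e : Fin d)) * fderiv ℝ (g (i+1) t) u (EuclideanSpace.single ((e : Fin d)) 1) :=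
    Finset.sum_eq_single_of_mem _ (Finset.mem_univ _) (fun x _ hx => hsingle x hx)
  rw [hsum] at hobs
  have hC : fderiv ℝ (g (i+1) t) u (EuclideanSpace.single ((e : Fin d)) 1)
      = ∏ k ∈ Finset.range (i+1), u (((t - 1 + (k:ℤ) : ℤ) : Fin d)) :=
    fderiv_single_of_affine hdiff _ _
      (fun y => g_up (i+1) (by omega) h3 t e (by push_cast [he]; ring) u y)
  rw [hC] at hobs
  have hP : (∏ k ∈ Finset.range (i+1), u (((t - 1 + (k:ℤ) : ℤ) : Fin d))) ≠ 0 :=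
    Finset.prod_ne_zero_iff.mpr (fun k _ => hu _)
  rcases mul_eq_zero.mp hobs with h | h
  · exact h
  · exact absurd h hP

lemma cover (I : ℕ) (hI : d ≤ 3*I + 3) (x : Fin d) :
    ∃ s : ℤ, -(2*(I:ℤ)) ≤ s ∧ s ≤ (I:ℤ)+2 ∧ ((s : Fin d)) = x := by
  have hx := x.isLt
  by_cases h : (x : ℕ) ≤ I + 2
  · exact ⟨((x:ℕ):ℤ), by omega, by omega, by rw [ck (x:ℕ) hx]⟩
  · refine ⟨((x:ℕ):ℤ) - d, by omega, by omega, ?_⟩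
    rw [ceq (show (d:ℤ) ∣ (((x:ℕ):ℤ) - d) - ((x:ℕ):ℤ) from ⟨-1, by ring⟩)]
    rw [ck (x:ℕ) hx]

end L96

/-- for the Lorenz 96' system (with `A` the identity), observing
the first three coordinates of `D^i v` for `0 ≤ i ≤ d - 3` determines the
initial condition whenever all of its coordinates are nonzero, and the
gradients of these observed quantities span `ℝ^d`. -/
theorem lorenz96_derivative_conditions (d : ℕ) (hd : 4 ≤ d)
    (u : EuclideanSpace ℝ (Fin d)) (hu : ∀ m : Fin d, u m ≠ 0) :
    haveI : NeZero d := ⟨by omega⟩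
    (∀ v : EuclideanSpace ℝ (Fin d),
      (∀ i ≤ d - 3, ∀ m : Fin 3,
        formalDeriv (fun x => x) (lorenz96B d) (lorenz96f d) i v
            (Fin.castLE (by omega) m) =
          formalDeriv (fun x => x) (lorenz96B d) (lorenz96f d) i u
            (Fin.castLE (by omega) m)) → v = u) ∧
    Submodule.span ℝ
      ((fun p : ℕ × Fin 3 => gradient
        (fun v => formalDeriv (fun x => x) (lorenz96B d) (lorenz96f d) p.1 v
          (Fin.castLE (by omega) p.2)) u) '' {p : ℕ × Fin 3 | p.1 ≤ d - 3}) = ⊤ := by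
  haveI : NeZero d := ⟨by omega⟩
  refine ⟨?_, ?_⟩
  · -- injectivity
    intro v hobs
    have hobs' : ∀ i : ℕ, i ≤ d - 3 → ∀ mv : ℕ, mv < 3 →
        L96.g i ((mv:ℕ):ℤ) v = L96.g i ((mv:ℕ):ℤ) u := by
      intro i hi mv hmv
      have h := hobs i hi ⟨mv, hmv⟩
      have hcast : (Fin.castLE (show 3 ≤ d by omega) (⟨mv, hmv⟩ : Fin 3)) =
          ((((mv:ℕ):ℤ)) : Fin d) := by
        rw [L96.ck mv (by omega)]
        rfl
      rw [hcast] at h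
      exact h
    have key : ∀ i : ℕ, 3*i < d → ∀ s : ℤ, -(2*(i:ℤ)) ≤ s → s ≤ (i:ℤ)+2 →
        v ((s : Fin d)) = u ((s : Fin d)) := by
      intro i
      induction i with
      | zero =>
        intro h3 s hs1 hs2
        lift s to ℕ using (by omega : (0:ℤ) ≤ s)
        have h := hobs' 0 (by omega) s (by omega)
        rw [L96.g_zero, L96.g_zero] at h
        exact h
      | succ i IH =>
        intro h3 s hs1 hs2
        have hIH : ∀ s : ℤ, -(2*(i:ℤ)) ≤ s → s ≤ (i:ℤ)+2 →
            v ((s : Fin d)) = u ((s : Fin d)) := IH (by omega)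
        have hup : v ((((i:ℤ)+3 : ℤ) : Fin d)) = u ((((i:ℤ)+3 : ℤ) : Fin d)) := by
          have hob := hobs' (i+1) (by omega) 2 (by omega)
          rw [show (((2:ℕ)):ℤ) = (2:ℤ) by norm_num] at hob
          exact L96.step_up u v hu i h3 2 ((i:ℤ)+3) (by push_cast; ring) hob
            (fun s h1 h2 => hIH s (by omega) (by omega))
        have hdn1 : v (((-2*(i:ℤ)-1 : ℤ) : Fin d)) = u (((-2*(i:ℤ)-1 : ℤ) : Fin d)) := by
          have hob := hobs' (i+1) (by omega) 1 (by omega)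
          rw [show (((1:ℕ)):ℤ) = (1:ℤ) by norm_num] at hob
          exact L96.step_down u v hu i h3 1 (-2*(i:ℤ)-1) (by push_cast; ring) hob
            (fun s h1 h2 => hIH s (by omega) (by omega))
        have hdn0 : v (((-2*(i:ℤ)-2 : ℤ) : Fin d)) = u (((-2*(i:ℤ)-2 : ℤ) : Fin d)) := by
          have hob := hobs' (i+1) (by omega) 0 (by omega)
          rw [show (((0:ℕ)):ℤ) = (0:ℤ) by norm_num] at hob
          refine L96.step_down u v hu i h3 0 (-2*(i:ℤ)-2) (by push_cast; ring) hob
            (fun s h1 h2 => ?_)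
          by_cases hs : s = -2*(i:ℤ)-1
          · subst hs; exact hdn1
          · exact hIH s (by omega) (by omega)
        rcases (by omega : s = (i:ℤ)+3 ∨ s = -2*(i:ℤ)-1 ∨ s = -2*(i:ℤ)-2 ∨
            (-(2*(i:ℤ)) ≤ s ∧ s ≤ (i:ℤ)+2)) with h|h|h|⟨h1,h2⟩
        · subst h; exact hup
        · subst h; exact hdn1
        · subst h; exact hdn0
        · exact hIH s h1 h2
    ext x
    obtain ⟨s, hs1, hs2, hs3⟩ := L96.cover ((d-1)/3) (by omega) x
    rw [← hs3]
    exact key ((d-1)/3) (by omega) s hs1 hs2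
  · -- span
    rw [← Submodule.orthogonal_eq_bot_iff, Submodule.eq_bot_iff]
    intro w hw
    have horth : ∀ i : ℕ, i ≤ d - 3 → ∀ mv : ℕ, mv < 3 →
        fderiv ℝ (L96.g i ((mv:ℕ):ℤ)) u w = 0 := by
      intro i hi mv hmv
      have h0 := (Submodule.mem_orthogonal _ w).mp hw _
        (Submodule.subset_span (Set.mem_image_of_mem _
          (show ((i, ⟨mv, hmv⟩) : ℕ × Fin 3) ∈ {p : ℕ × Fin 3 | p.1 ≤ d - 3} from hi)))
      have hfun : (fun v => formalDeriv (fun x => x) (lorenz96B d) (lorenz96f d) i v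
          (Fin.castLE (show 3 ≤ d by omega) ((⟨mv, hmv⟩ : Fin 3)))) = L96.g i ((mv:ℕ):ℤ) := by
        funext v
        show L96.D i v _ = L96.D i v _
        refine congrArg (L96.D i v) ?_
        rw [L96.ck mv (by omega)]
        rfl
      dsimp only at h0
      rw [hfun] at h0
      rw [gradient] at h0
      rw [InnerProductSpace.toDual_symm_apply] at h0
      exact h0
    have key : ∀ i : ℕ, 3*i < d → ∀ s : ℤ, -(2*(i:ℤ)) ≤ s → s ≤ (i:ℤ)+2 →
        w ((s : Fin d)) = 0 := by
      intro i
      induction i with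
      | zero =>
        intro h3 s hs1 hs2
        lift s to ℕ using (by omega : (0:ℤ) ≤ s)
        have h := horth 0 (by omega) s (by omega)
        have hfun0 : L96.g (d := d) 0 ((s:ℕ):ℤ) =
            fun v : EuclideanSpace ℝ (Fin d) => v ((((s:ℕ):ℤ)) : Fin d) :=
          funext fun v => L96.g_zero _ v
        rw [hfun0] at h
        have hproj : (fun v : EuclideanSpace ℝ (Fin d) => v ((((s:ℕ):ℤ)) : Fin d)) =
            (EuclideanSpace.proj ((((s:ℕ):ℤ)) : Fin d) :
              EuclideanSpace ℝ (Fin d) →L[ℝ] ℝ) := rfl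
        rw [hproj, ContinuousLinearMap.fderiv] at h
        exact h
      | succ i IH =>
        intro h3 s hs1 hs2
        have hIH : ∀ s : ℤ, -(2*(i:ℤ)) ≤ s → s ≤ (i:ℤ)+2 → w ((s : Fin d)) = 0 :=
          IH (by omega)
        have hup : w ((((i:ℤ)+3 : ℤ) : Fin d)) = 0 := by
          have hob := horth (i+1) (by omega) 2 (by omega)
          rw [show (((2:ℕ)):ℤ) = (2:ℤ) by norm_num] at hob
          exact L96.span_step_up u w hu i h3 2 ((i:ℤ)+3) (by push_cast; ring) hob
            (fun s h1 h2 => hIH s (by omega) (by omega))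
        have hdn1 : w (((-2*(i:ℤ)-1 : ℤ) : Fin d)) = 0 := by
          have hob := horth (i+1) (by omega) 1 (by omega)
          rw [show (((1:ℕ)):ℤ) = (1:ℤ) by norm_num] at hob
          exact L96.span_step_down u w hu i h3 1 (-2*(i:ℤ)-1) (by push_cast; ring) hob
            (fun s h1 h2 => hIH s (by omega) (by omega))
        have hdn0 : w (((-2*(i:ℤ)-2 : ℤ) : Fin d)) = 0 := by
          have hob := horth (i+1) (by omega) 0 (by omega)
          rw [show (((0:ℕ)):ℤ) = (0:ℤ) by norm_num] at hob
          refine L96.span_step_down u w hu i h3 0 (-2*(i:ℤ)-2) (by push_cast; ring) hob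
            (fun s h1 h2 => ?_)
          by_cases hs : s = -2*(i:ℤ)-1
          · subst hs; exact hdn1
          · exact hIH s (by omega) (by omega)
        rcases (by omega : s = (i:ℤ)+3 ∨ s = -2*(i:ℤ)-1 ∨ s = -2*(i:ℤ)-2 ∨
            (-(2*(i:ℤ)) ≤ s ∧ s ≤ (i:ℤ)+2)) with h|h|h|⟨h1,h2⟩
        · subst h; exact hup
        · subst h; exact hdn1
        · subst h; exact hdn0
        · exact hIH s h1 h2
    ext x
    obtain ⟨s, hs1, hs2, hs3⟩ := L96.cover ((d-1)/3) (by omega) x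
    show w x = 0
    rw [← hs3]
    exact key ((d-1)/3) (by omega) s hs1 hs2
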